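/- Let A ∈ ℚ^{m×n}, b ∈ ℚ^m and j ∈ {1,…,n} with I⁻_j(A) ≠ ∅ and I⁺_j(A) ≠ ∅. Then for every x ∈ ℝ^n the following three statements are equivalent: (1) there exists r ∈ ℝ such that x[j := r] satisfies A x ≤ b; (2) there exists i ∈ I⁻_j(A) such that x satisfies fmpproj(A,b,j,i); (3) there exists i ∈ I⁺_j(A) such that x satisfies fmpproj(A,b,j,i). Equivalently, the projection of the solution set of A x ≤ b onto the variables other than x_j equals the union over i ∈ I⁻_j(A) of the solution sets of fmpproj(A,b,j,i), and also equals the union over i ∈ I⁺_j(A) of these solution sets. -/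

import Mathlib

/-- An assignment `x ∈ ℝ^n` satisfies the system `A x ≤ b` (componentwise). -/
def SatSys {ι : Type*} [Fintype ι] {n : ℕ} (A : Matrix ι (Fin n) ℚ) (b : ι → ℚ)
    (x : Fin n → ℝ) : Prop :=
  ∀ i, ∑ k, (A i k : ℝ) * x k ≤ (b i : ℝ)

/-- The `k`-th standard unit row vector. -/
def unitRow {ι : Type*} [DecidableEq ι] (k : ι) : ι → ℚ :=
  fun l => if l = k then 1 else 0

/-- The projection matrix `F ∈ ℚ^{(m−1)×m}` of the restricted projection of `x_j`
with respect to the designated row `i`: its rows, indexed by `i' ≠ i`, are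
`(1/A_{i,j})·e_i − (1/A_{i',j})·e_{i'}` for `i' ∈ I⁻_j(A)\{i}`,
`−(1/A_{i,j})·e_i + (1/A_{i',j})·e_{i'}` for `i' ∈ I⁺_j(A)\{i}`, and
`e_{i'}` for `i' ∈ N_j(A)`. -/
def projMatrix {m n : ℕ} (A : Matrix (Fin m) (Fin n) ℚ) (j : Fin n) (i : Fin m) :
    Matrix {i' : Fin m // i' ≠ i} (Fin m) ℚ :=
  Matrix.of fun i' =>
    if A i'.1 j < 0 then (A i j)⁻¹ • unitRow i - (A i'.1 j)⁻¹ • unitRow i'.1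
    else if 0 < A i'.1 j then (A i'.1 j)⁻¹ • unitRow i'.1 - (A i j)⁻¹ • unitRow i
    else unitRow i'.1

/-- `x` satisfies the restricted projection `fmpproj(A,b,j,i)`, i.e. the system
`(F A) x ≤ F b` for the projection matrix `F` w.r.t. `j` and the designated row `i`. -/
def SatProj {m n : ℕ} (A : Matrix (Fin m) (Fin n) ℚ) (b : Fin m → ℚ) (j : Fin n)
    (i : Fin m) (x : Fin n → ℝ) : Prop :=
  SatSys (projMatrix A j i * A) ((projMatrix A j i).mulVec b) x

/-- The restricted projections for all lower bounds (resp. all upper bounds) of `x_j`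
exactly cover the projection of the solution set of `A x ≤ b` onto the variables
other than `x_j`. -/

lemma unit_dot {m : ℕ} (p : Fin m) (v : Fin m → ℝ) :
    ∑ l, ((unitRow p l : ℚ) : ℝ) * v l = v p := by
  simp [unitRow, apply_ite (fun q : ℚ => (q : ℝ)), ite_mul]

lemma comb_dot {m : ℕ} (a a' : ℚ) (p q : Fin m) (v : Fin m → ℝ) :
    ∑ l, (((a • unitRow p - a' • unitRow q) l : ℚ) : ℝ) * v l
      = (a : ℝ) * v p - (a' : ℝ) * v q := by
  have : ∀ l, (((a • unitRow p - a' • unitRow q) l : ℚ) : ℝ) * v l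
      = (a : ℝ) * ((unitRow p l : ℚ) : ℝ) * v l - (a' : ℝ) * ((unitRow q l : ℚ) : ℝ) * v l := by
    intro l
    simp [Pi.sub_apply, Pi.smul_apply, smul_eq_mul]
    ring
  rw [Finset.sum_congr rfl (fun l _ => this l), Finset.sum_sub_distrib]
  simp only [mul_assoc, ← Finset.mul_sum, unit_dot]

lemma lb_iff {a gg bb xj r : ℝ} (ha : a < 0) :
    a * (r - xj) + gg ≤ bb ↔ xj - a⁻¹ * (gg - bb) ≤ r := by
  have h3 : a⁻¹ * (gg - bb) = -((bb - gg)/a) := by field_simp; ring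
  constructor
  · intro h
    have h2 : (bb - gg)/a ≤ r - xj := by
      rw [div_le_iff_of_neg ha]; nlinarith
    linarith
  · intro h
    have h2 : (bb - gg)/a ≤ r - xj := by linarith
    rw [div_le_iff_of_neg ha] at h2; nlinarith

lemma ub_iff {a gg bb xj r : ℝ} (ha : 0 < a) :
    a * (r - xj) + gg ≤ bb ↔ r ≤ xj - a⁻¹ * (gg - bb) := by
  have h3 : a⁻¹ * (gg - bb) = -((bb - gg)/a) := by field_simp; ring
  constructor
  · intro h
    have h2 : r - xj ≤ (bb - gg)/a := by
      rw [le_div_iff₀ ha]; nlinarith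
    linarith
  · intro h
    have h2 : r - xj ≤ (bb - gg)/a := by linarith
    rw [le_div_iff₀ ha] at h2; nlinarith

theorem restricted_projection_covers {m n : ℕ} (A : Matrix (Fin m) (Fin n) ℚ)
    (b : Fin m → ℚ) (j : Fin n)
    (hl : ∃ ℓ, A ℓ j < 0) (hu : ∃ u, 0 < A u j) (x : Fin n → ℝ) :
    ((∃ r : ℝ, SatSys A b (Function.update x j r)) ↔
        ∃ i, A i j < 0 ∧ SatProj A b j i x) ∧
    ((∃ r : ℝ, SatSys A b (Function.update x j r)) ↔
        ∃ i, 0 < A i j ∧ SatProj A b j i x) := by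
  classical
  set g : Fin m → ℝ := fun l => ∑ k, (A l k : ℝ) * x k with hg
  set c : Fin m → ℝ := fun l => x j - ((A l j : ℝ))⁻¹ * (g l - (b l : ℝ)) with hc
  -- characterization of SatSys on updated x
  have hupd : ∀ r : ℝ, SatSys A b (Function.update x j r) ↔
      ∀ l, (A l j : ℝ) * (r - x j) + g l ≤ (b l : ℝ) := by
    intro r
    unfold SatSys
    refine forall_congr' fun l => ?_
    have hsum : ∑ k, (A l k : ℝ) * Function.update x j r k
        = (A l j : ℝ) * (r - x j) + g l := by
      have h1 : ∀ k, (A l k : ℝ) * Function.update x j r k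
          = (if k = j then (A l j : ℝ) * (r - x j) else 0) + (A l k : ℝ) * x k := by
        intro k
        by_cases hk : k = j
        · subst hk; simp [Function.update_self]; ring
        · simp [Function.update_of_ne hk, hk]
      rw [Finset.sum_congr rfl (fun k _ => h1 k), Finset.sum_add_distrib,
        Finset.sum_ite_eq' Finset.univ j (fun _ => (A l j : ℝ) * (r - x j))]
      simp [hg]
    rw [hsum]
  -- characterization of SatProj
  have hproj : ∀ i : Fin m, SatProj A b j i x ↔ ∀ i' : Fin m, i' ≠ i →
      (if A i' j < 0 then c i' ≤ c i
       else if 0 < A i' j then c i ≤ c i'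
       else g i' ≤ (b i' : ℝ)) := by
    intro i
    unfold SatProj SatSys
    rw [Subtype.forall]
    refine forall_congr' fun i' => forall_congr' fun hi' => ?_
    have hswap : ∀ w : Fin m → ℚ,
        ∑ k, (((projMatrix A j i * A) ⟨i', hi'⟩ k : ℚ) : ℝ) * x k
          = ∑ l, ((projMatrix A j i ⟨i', hi'⟩ l : ℚ) : ℝ) * g l := by
      intro w
      simp only [Matrix.mul_apply]
      push_cast
      simp only [Finset.sum_mul]
      rw [Finset.sum_comm]
      simp [hg, Finset.mul_sum, mul_assoc]
    have hb : ((projMatrix A j i).mulVec b ⟨i', hi'⟩ : ℝ)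
        = ∑ l, ((projMatrix A j i ⟨i', hi'⟩ l : ℚ) : ℝ) * (b l : ℝ) := by
      simp only [Matrix.mulVec, dotProduct]
      push_cast
      rfl
    rw [hswap (fun _ => 0), hb]
    unfold projMatrix
    by_cases h1 : A i' j < 0
    · simp only [Matrix.of_apply, h1, if_pos, if_true]
      rw [comb_dot, comb_dot]
      simp only [hc]
      push_cast
      constructor <;> intro h <;> nlinarith [h]
    · by_cases h2 : 0 < A i' j
      · simp only [Matrix.of_apply, h1, h2, if_false, if_true]
        rw [comb_dot, comb_dot]
        simp only [hc]
        push_cast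
        constructor <;> intro h <;> nlinarith [h]
      · simp only [Matrix.of_apply, h1, h2, if_false]
        rw [unit_dot, unit_dot]
  constructor
  · -- lower bounds version
    constructor
    · rintro ⟨r, hr⟩
      rw [hupd r] at hr
      -- each lower row: c l ≤ r ; each upper row: r ≤ c l ; zero rows : g l ≤ b l
      have hlow : ∀ l, A l j < 0 → c l ≤ r := by
        intro l h
        have := hr l
        rw [lb_iff (by exact_mod_cast h)] at this
        exact this
      have hup : ∀ l, 0 < A l j → r ≤ c l := by
        intro l h
        have := hr l
        rw [ub_iff (by exact_mod_cast h)] at this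
        exact this
      have hz : ∀ l, A l j = 0 → g l ≤ (b l : ℝ) := by
        intro l h
        have := hr l
        rw [h] at this
        push_cast at this
        linarith
      obtain ⟨i, hi, hmax⟩ := (Finset.univ.filter (fun l => A l j < 0)).exists_max_image c
        (by obtain ⟨ℓ, hℓ⟩ := hl; exact ⟨ℓ, by simp [hℓ]⟩)
      simp only [Finset.mem_filter, Finset.mem_univ, true_and] at hi hmax
      refine ⟨i, hi, (hproj i).mpr ?_⟩
      intro i' hi'
      by_cases h1 : A i' j < 0
      · simpa [h1] using hmax i' h1
      · by_cases h2 : 0 < A i' j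
        · simp only [h1, h2, if_false, if_true]
          exact le_trans (hlow i hi) (hup i' h2)
        · simp only [h1, h2, if_false]
          exact hz i' (le_antisymm (not_lt.1 h2) (not_lt.1 h1))
    · rintro ⟨i, hi, hp⟩
      rw [hproj i] at hp
      refine ⟨c i, (hupd (c i)).mpr ?_⟩
      intro l
      by_cases hli : l = i
      · subst hli
        rw [lb_iff (show (A l j : ℝ) < 0 by exact_mod_cast hi)]
      · have := hp l hli
        by_cases h1 : A l j < 0
        · rw [lb_iff (show (A l j : ℝ) < 0 by exact_mod_cast h1)]
          exact (by simpa [h1] using this : c l ≤ c i)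
        · by_cases h2 : 0 < A l j
          · rw [ub_iff (show (0:ℝ) < (A l j : ℝ) by exact_mod_cast h2)]
            exact (by simpa [h1, h2] using this : c i ≤ c l)
          · have hz : A l j = 0 := le_antisymm (not_lt.1 h2) (not_lt.1 h1)
            rw [hz]
            push_cast
            simpa [h1, h2] using this
  · -- upper bounds version
    constructor
    · rintro ⟨r, hr⟩
      rw [hupd r] at hr
      have hlow : ∀ l, A l j < 0 → c l ≤ r := by
        intro l h
        have := hr l
        rw [lb_iff (by exact_mod_cast h)] at this
        exact this
      have hup : ∀ l, 0 < A l j → r ≤ c l := by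
        intro l h
        have := hr l
        rw [ub_iff (by exact_mod_cast h)] at this
        exact this
      have hz : ∀ l, A l j = 0 → g l ≤ (b l : ℝ) := by
        intro l h
        have := hr l
        rw [h] at this
        push_cast at this
        linarith
      obtain ⟨i, hi, hmin⟩ := (Finset.univ.filter (fun l => 0 < A l j)).exists_min_image c
        (by obtain ⟨u, hu'⟩ := hu; exact ⟨u, by simp [hu']⟩)
      simp only [Finset.mem_filter, Finset.mem_univ, true_and] at hi hmin
      refine ⟨i, hi, (hproj i).mpr ?_⟩
      intro i' hi'
      by_cases h1 : A i' j < 0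
      · simp only [h1, if_true]
        exact le_trans (hlow i' h1) (hup i hi)
      · by_cases h2 : 0 < A i' j
        · simpa [h1, h2] using hmin i' h2
        · simp only [h1, h2, if_false]
          exact hz i' (le_antisymm (not_lt.1 h2) (not_lt.1 h1))
    · rintro ⟨i, hi, hp⟩
      rw [hproj i] at hp
      refine ⟨c i, (hupd (c i)).mpr ?_⟩
      intro l
      by_cases hli : l = i
      · subst hli
        rw [ub_iff (show (0:ℝ) < (A l j : ℝ) by exact_mod_cast hi)]
      · have := hp l hli
        by_cases h1 : A l j < 0
        · rw [lb_iff (show (A l j : ℝ) < 0 by exact_mod_cast h1)]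
          exact (by simpa [h1] using this : c l ≤ c i)
        · by_cases h2 : 0 < A l j
          · rw [ub_iff (show (0:ℝ) < (A l j : ℝ) by exact_mod_cast h2)]
            exact (by simpa [h1, h2] using this : c i ≤ c l)
          · have hz : A l j = 0 := le_antisymm (not_lt.1 h2) (not_lt.1 h1)
            rw [hz]
            push_cast
            simpa [h1, h2] using this
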